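/- Let n ≥ 3 and let η₁, …, ηₙ be nonnegative real numbers with Σ_{i=1}^n ηᵢ ≤ 1. For k = 1, …, n let S_k denote the k-th elementary symmetric polynomial of η₁, …, ηₙ. Then Σ_{k=3}^n (−1)^{k−1} (k−2) 2^{k−2} S_k ≥ 0. -/

import Mathlib

open Finset

/-- The `k`-th elementary symmetric polynomial of `η₁, …, ηₙ`. -/
def esym (n : ℕ) (η : Fin n → ℝ) (k : ℕ) : ℝ :=
  ∑ t ∈ Finset.univ.powersetCard k, ∏ i ∈ t, η i

/-! ### Auxiliary material -/

/-- The coefficient `-(k-2)(-2)^k/4`, which agrees with `(-1)^(k-1) (k-2) 2^(k-2)` for `k ≥ 3`. -/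
noncomputable def cAux (k : ℕ) : ℝ := -(((k : ℝ) - 2) * (-2) ^ k) / 4

lemma coef_eq (k : ℕ) (hk : 3 ≤ k) :
    (-1 : ℝ) ^ (k - 1) * ((k : ℝ) - 2) * 2 ^ (k - 2) = cAux k := by
  obtain ⟨m, rfl⟩ := Nat.exists_eq_add_of_le hk
  have e1 : 3 + m - 1 = 2 + m := by omega
  have e2 : 3 + m - 2 = 1 + m := by omega
  rw [cAux, e1, e2]
  have : ((-2 : ℝ)) ^ (3 + m) = (-1 : ℝ) ^ (3 + m) * 2 ^ (3 + m) := by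
    rw [← neg_one_mul, mul_pow]
  rw [this]
  push_cast
  rw [pow_add, pow_add, pow_add, pow_add]
  ring

lemma sum_powerset_prod {ι : Type*} [DecidableEq ι] (s : Finset ι) (f : ι → ℝ) :
    ∑ t ∈ s.powerset, ∏ i ∈ t, f i = ∏ i ∈ s, (f i + 1) := by
  rw [Finset.prod_add]
  simp

lemma sum_powerset_card_prod {ι : Type*} [DecidableEq ι] (s : Finset ι) (f : ι → ℝ) :
    ∑ t ∈ s.powerset, (#t : ℝ) * ∏ i ∈ t, f i
      = ∑ j ∈ s, f j * ∏ i ∈ s.erase j, (f i + 1) := by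
  induction s using Finset.induction_on with
  | empty => simp
  | insert a s ha ih =>
    rw [Finset.sum_powerset_insert ha, Finset.sum_insert ha, Finset.erase_insert ha]
    have h1 : ∀ t ∈ s.powerset, (#(insert a t) : ℝ) * ∏ i ∈ insert a t, f i
        = f a * ((#t : ℝ) * ∏ i ∈ t, f i) + f a * ∏ i ∈ t, f i := by
      intro t ht
      have hat : a ∉ t := fun h => ha (mem_powerset.1 ht h)
      rw [card_insert_of_notMem hat, prod_insert hat]
      push_cast; ring
    rw [sum_congr rfl h1, sum_add_distrib, ← mul_sum, ← mul_sum, ih, sum_powerset_prod]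
    have h2 : ∀ j ∈ s, f j * ∏ i ∈ (insert a s).erase j, (f i + 1)
        = (f a + 1) * (f j * ∏ i ∈ s.erase j, (f i + 1)) := by
      intro j hj
      have haj : a ≠ j := fun h => ha (h ▸ hj)
      rw [erase_insert_of_ne haj, prod_insert (fun h => ha (mem_of_mem_erase h))]
      ring
    rw [sum_congr rfl h2, ← mul_sum]
    ring

section Ineq
variable {n : ℕ} (η : Fin n → ℝ) (hη : ∀ i, 0 ≤ η i) (hsum : ∑ i, η i ≤ 1)

/-- The quantity `B = ∑_{j∈t} η_j ∏_{i∈t, i≠j} (1 - 2 η_i)`. -/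
noncomputable def Bfun (t : Finset (Fin n)) : ℝ :=
  ∑ j ∈ t, η j * ∏ i ∈ t.erase j, (1 - 2 * η i)

include hη hsum

lemma sum_sub_le (t : Finset (Fin n)) : ∑ i ∈ t, η i ≤ 1 :=
  le_trans (Finset.sum_le_univ_sum_of_nonneg hη) hsum

omit hsum in
lemma weier (t : Finset (Fin n)) (h : ∀ i ∈ t, η i ≤ 1 / 2) :
    1 - 2 * ∑ i ∈ t, η i ≤ ∏ i ∈ t, (1 - 2 * η i) := by
  induction t using Finset.induction_on with
  | empty => simp
  | insert a t ha ih =>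
    have h' : ∀ i ∈ t, η i ≤ 1 / 2 := fun i hi => h i (mem_insert_of_mem hi)
    have hprev := ih h'
    have h0 : 0 ≤ 1 - 2 * η a := by
      have := h a (mem_insert_self a t); linarith
    have hst : 0 ≤ ∑ i ∈ t, η i := Finset.sum_nonneg fun i _ => hη i
    rw [Finset.sum_insert ha, Finset.prod_insert ha]
    nlinarith [mul_le_mul_of_nonneg_left hprev h0, mul_nonneg (hη a) hst]

omit hη hsum in
lemma prod_nonneg' (t : Finset (Fin n)) (h : ∀ i ∈ t, η i ≤ 1 / 2) :
    0 ≤ ∏ i ∈ t, (1 - 2 * η i) :=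
  Finset.prod_nonneg fun i hi => by have := h i hi; linarith

omit hsum in
lemma prod_le_one' (t : Finset (Fin n)) (h : ∀ i ∈ t, η i ≤ 1 / 2) :
    ∏ i ∈ t, (1 - 2 * η i) ≤ 1 :=
  Finset.prod_le_one (fun i hi => by have := h i hi; linarith)
    (fun i hi => by have := hη i; linarith)

lemma pair_le (i j : Fin n) (hij : i ≠ j) : η i + η j ≤ 1 := by
  have h : η i + η j = ∑ k ∈ ({i, j} : Finset (Fin n)), η k := (Finset.sum_pair hij).symm
  rw [h]
  exact sum_sub_le η hη hsum _

lemma weier_all (t : Finset (Fin n)) :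
    1 - 2 * ∑ i ∈ t, η i ≤ ∏ i ∈ t, (1 - 2 * η i) := by
  by_cases hbig : ∃ m ∈ t, 1 / 2 < η m
  · obtain ⟨m, hm, hm2⟩ := hbig
    have hrest : ∀ i ∈ t.erase m, η i ≤ 1 / 2 := by
      intro i hi
      have := pair_le η hη hsum i m (Finset.ne_of_mem_erase hi)
      linarith
    have hp0 := prod_nonneg' η _ hrest
    have hp1 := prod_le_one' η hη _ hrest
    rw [← Finset.mul_prod_erase _ _ hm]
    have hmle : η m ≤ ∑ i ∈ t, η i := Finset.single_le_sum (fun i _ => hη i) hm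
    nlinarith
  · push_neg at hbig
    exact weier η hη t hbig

lemma Bfun_nonneg (t : Finset (Fin n)) : 0 ≤ Bfun η t := by
  by_cases hbig : ∃ m ∈ t, 1 / 2 < η m
  · obtain ⟨m, hm, hm2⟩ := hbig
    have hrest : ∀ i ∈ t.erase m, η i ≤ 1 / 2 := by
      intro i hi
      have := pair_le η hη hsum i m (Finset.ne_of_mem_erase hi)
      linarith
    rw [Bfun, ← Finset.add_sum_erase _ _ hm]
    have hterm : ∀ j ∈ t.erase m,
        (1 - 2 * η m) * η j ≤ η j * ∏ i ∈ t.erase j, (1 - 2 * η i) := by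
      intro j hj
      have hjm : j ≠ m := Finset.ne_of_mem_erase hj
      have hjt : j ∈ t := Finset.mem_of_mem_erase hj
      have hmj : m ∈ t.erase j := Finset.mem_erase.2 ⟨fun h => hjm h.symm, hm⟩
      rw [← Finset.mul_prod_erase _ _ hmj]
      have hin : ∀ i ∈ (t.erase j).erase m, η i ≤ 1 / 2 := by
        intro i hi
        exact hrest i (Finset.mem_erase.2 ⟨Finset.ne_of_mem_erase hi,
          Finset.mem_of_mem_erase (Finset.mem_of_mem_erase hi)⟩)
      have hp0 := prod_nonneg' η _ hin
      have hp1 := prod_le_one' η hη _ hin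
      have hη' := hη j
      have hkey : 0 ≤ η j * ((2 * η m - 1) * (1 - ∏ i ∈ (t.erase j).erase m, (1 - 2 * η i))) :=
        mul_nonneg hη' (mul_nonneg (by linarith) (by linarith))
      nlinarith [hkey]
    have h2 : ∑ j ∈ t.erase m, (1 - 2 * η m) * η j
        ≤ ∑ j ∈ t.erase m, η j * ∏ i ∈ t.erase j, (1 - 2 * η i) :=
      Finset.sum_le_sum hterm
    rw [← Finset.mul_sum] at h2
    have hsplit : η m + ∑ j ∈ t.erase m, η j = ∑ j ∈ t, η j :=
      Finset.add_sum_erase _ _ hm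
    have htot := sum_sub_le η hη hsum t
    have hEle : ∑ j ∈ t.erase m, η j ≤ 1 - η m := by linarith
    have hneg : 1 - 2 * η m < 0 := by linarith
    have h3 : (1 - 2 * η m) * (1 - η m) ≤ (1 - 2 * η m) * ∑ j ∈ t.erase m, η j := by
      nlinarith
    have hW := weier η hη _ hrest
    have hE0 : 0 ≤ ∑ j ∈ t.erase m, η j := Finset.sum_nonneg fun i _ => hη i
    have h4 : η m * (2 * η m - 1) ≤ η m * ∏ i ∈ t.erase m, (1 - 2 * η i) := by
      nlinarith [hη m]
    nlinarith [sq_nonneg (2 * η m - 1)]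
  · push_neg at hbig
    refine Finset.sum_nonneg fun j hj => mul_nonneg (hη j) ?_
    exact prod_nonneg' η _ (fun i hi => hbig i (Finset.mem_of_mem_erase hi))

omit hη hsum in
lemma Bfun_insert (a : Fin n) (t : Finset (Fin n)) (ha : a ∉ t) :
    Bfun η (insert a t) = η a * ∏ i ∈ t, (1 - 2 * η i) + (1 - 2 * η a) * Bfun η t := by
  rw [Bfun, Finset.sum_insert ha, Finset.erase_insert ha, Bfun, Finset.mul_sum]
  congr 1
  refine Finset.sum_congr rfl fun j hj => ?_
  have haj : a ≠ j := fun h => ha (h ▸ hj)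
  rw [erase_insert_of_ne haj, Finset.prod_insert (fun h => ha (Finset.mem_of_mem_erase h))]
  ring

lemma key1 (t : Finset (Fin n)) :
    ∏ i ∈ t, (1 - 2 * η i) + 2 * Bfun η t ≤ 1 := by
  induction t using Finset.induction_on with
  | empty => simp [Bfun]
  | insert a t ha ih =>
    rw [Finset.prod_insert ha, Bfun_insert η a t ha]
    nlinarith [Bfun_nonneg η hη hsum t, hη a]

lemma key2 (t : Finset (Fin n)) :
    1 ≤ ∏ i ∈ t, (1 - 2 * η i) + Bfun η t + ∑ i ∈ t, η i := by
  induction t using Finset.induction_on with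
  | empty => simp [Bfun]
  | insert a t ha ih =>
    rw [Finset.prod_insert ha, Bfun_insert η a t ha, Finset.sum_insert ha]
    nlinarith [key1 η hη hsum t, hη a]

end Ineq

/-- For `n ≥ 3` and nonnegative `η₁,…,ηₙ` with `∑ ηᵢ ≤ 1`,
`∑_{k=3}^n (−1)^{k−1} (k−2) 2^{k−2} S_k ≥ 0`. -/
theorem alternating_esym_tail_nonneg (n : ℕ) (hn : 3 ≤ n) (η : Fin n → ℝ)
    (hη : ∀ i, 0 ≤ η i) (hsum : ∑ i, η i ≤ 1) :
    0 ≤ ∑ k ∈ Finset.Icc 3 n, (-1 : ℝ) ^ (k - 1) * ((k : ℝ) - 2) * 2 ^ (k - 2) * esym n η k := by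
  -- rewrite the coefficients
  have hcoef : ∑ k ∈ Finset.Icc 3 n, (-1 : ℝ) ^ (k - 1) * ((k : ℝ) - 2) * 2 ^ (k - 2) * esym n η k
      = ∑ k ∈ Finset.Icc 3 n, cAux k * esym n η k := by
    refine Finset.sum_congr rfl fun k hk => ?_
    rw [coef_eq k (Finset.mem_Icc.1 hk).1]
  -- express the full sum over `range (n+1)` via the powerset
  have hC : ∑ k ∈ range (n + 1), cAux k * esym n η k
      = ∑ t ∈ (univ : Finset (Fin n)).powerset, cAux #t * ∏ i ∈ t, η i := by
    rw [Finset.sum_powerset, card_univ, Fintype.card_fin]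
    refine Finset.sum_congr rfl fun k _ => ?_
    rw [esym, Finset.mul_sum]
    refine Finset.sum_congr rfl fun t ht => ?_
    rw [(Finset.mem_powersetCard.1 ht).2]
  -- evaluate the powerset sum in closed form
  have hD : ∀ t : Finset (Fin n), cAux #t * ∏ i ∈ t, η i
      = -(1 / 4) * ((#t : ℝ) * ∏ i ∈ t, (-2 * η i)) + (1 / 2) * ∏ i ∈ t, (-2 * η i) := by
    intro t
    have h : ∏ i ∈ t, (-2 * η i) = (-2 : ℝ) ^ #t * ∏ i ∈ t, η i := by
      rw [Finset.prod_mul_distrib, Finset.prod_const]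
    rw [h, cAux]; ring
  have hprodA : ∀ t : Finset (Fin n), ∏ i ∈ t, ((-2 * η i) + 1) = ∏ i ∈ t, (1 - 2 * η i) :=
    fun t => Finset.prod_congr rfl fun i _ => by ring
  have hE : ∑ t ∈ (univ : Finset (Fin n)).powerset, cAux #t * ∏ i ∈ t, η i
      = -(1 / 4) * (∑ j, (-2 * η j) * ∏ i ∈ univ.erase j, (1 - 2 * η i))
        + (1 / 2) * ∏ i, (1 - 2 * η i) := by
    rw [Finset.sum_congr rfl fun t _ => hD t, sum_add_distrib, ← mul_sum, ← mul_sum,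
      sum_powerset_card_prod, sum_powerset_prod, hprodA]
    congr 2
    refine Finset.sum_congr rfl fun j _ => ?_
    rw [hprodA]
  have hBrw : ∑ j, (-2 * η j) * ∏ i ∈ univ.erase j, (1 - 2 * η i) = -2 * Bfun η univ := by
    rw [Bfun, Finset.mul_sum]
    exact Finset.sum_congr rfl fun j _ => by ring
  -- split off the first three terms
  have hsplit : ∑ k ∈ range (n + 1), cAux k * esym n η k
      = (cAux 0 * esym n η 0 + cAux 1 * esym n η 1 + cAux 2 * esym n η 2)
        + ∑ k ∈ Finset.Icc 3 n, cAux k * esym n η k := by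
    rw [range_eq_Ico, ← Finset.sum_Ico_consecutive _ (by omega : 0 ≤ 3) (by omega : 3 ≤ n + 1),
      Finset.Ico_add_one_right_eq_Icc]
    congr 1
    rw [show Finset.Ico 0 3 = {0, 1, 2} from rfl]
    rw [Finset.sum_insert (by decide), Finset.sum_insert (by decide), Finset.sum_singleton]
    ring
  have he0 : esym n η 0 = 1 := by simp [esym]
  have he1 : esym n η 1 = ∑ i, η i := by
    rw [esym, Finset.powersetCard_one, Finset.sum_map]; simp
  have hc0 : cAux 0 = 1 / 2 := by norm_num [cAux]
  have hc1 : cAux 1 = -(1 / 2) := by norm_num [cAux]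
  have hc2 : cAux 2 = 0 := by norm_num [cAux]
  have hkey := key2 η hη hsum univ
  rw [hcoef]
  have hfin : ∑ k ∈ Finset.Icc 3 n, cAux k * esym n η k
      = (∏ i, (1 - 2 * η i) + Bfun η univ + ∑ i, η i - 1) / 2 := by
    have := hsplit
    rw [hC, hE, hBrw, he0, he1, hc0, hc1, hc2] at this
    linarith [this]
  rw [hfin]
  linarith
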